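/- Let d ≥ 2, 𝒴 a finite set, and W : Fin d → 𝒴 → ℝ a channel with all entries strictly positive and each row a probability vector. Define the symmetrized channel W̄ on output alphabet (permutations of Fin d) × 𝒴 by W̄((π, y)|x) = W(y|π^{-1}x)/d!. Then for every pair of inputs a ≠ b: χ²(W̄(·|b) ‖ W̄(·|a)) = (1/(d(d−1))) · ∑_{i ≠ j} χ²(W(·|j) ‖ W(·|i)) ≤ max_{i≠j} χ²(W(·|j) ‖ W(·|i)). -/

import Mathlib

open Finset BigOperators

lemma chi_aux (u v k : ℝ) (hv : v ≠ 0) (hk : k ≠ 0) :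
    (u/k - v/k)^2/(v/k) = (u-v)^2/v/k := by
  field_simp

lemma exists_perm_pair {d : ℕ} {i j i' j' : Fin d} (hij : i ≠ j) (hij' : i' ≠ j') :
    ∃ σ : Equiv.Perm (Fin d), σ i' = i ∧ σ j' = j := by
  set j'' := Equiv.swap i i' j' with hj''
  have h1 : j'' ≠ i := by
    intro h
    apply hij'
    have : j' = i' := (Equiv.swap i i').injective (by rw [← hj'', h, Equiv.swap_apply_right])
    exact this.symm
  refine ⟨(Equiv.swap j j'') * (Equiv.swap i i'), ?_, ?_⟩
  · simp only [Equiv.Perm.mul_apply, Equiv.swap_apply_right]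
    exact Equiv.swap_apply_of_ne_of_ne hij h1.symm
  · simp only [Equiv.Perm.mul_apply, ← hj'', Equiv.swap_apply_right]

lemma fiber_card_eq {d : ℕ} (a b : Fin d) {i j i' j' : Fin d} (hij : i ≠ j) (hij' : i' ≠ j') :
    (univ.filter (fun π : Equiv.Perm (Fin d) => π i = a ∧ π j = b)).card
      = (univ.filter (fun π : Equiv.Perm (Fin d) => π i' = a ∧ π j' = b)).card := by
  obtain ⟨σ, h1, h2⟩ := exists_perm_pair hij hij'
  refine Finset.card_nbij' (fun π => π * σ) (fun π => π * σ⁻¹) ?_ ?_ ?_ ?_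
  · intro π hπ
    simp only [Finset.mem_coe, mem_filter, mem_univ, true_and] at hπ ⊢
    simp [Equiv.Perm.mul_apply, h1, h2, hπ.1, hπ.2]
  · intro π hπ
    simp only [Finset.mem_coe, mem_filter, mem_univ, true_and] at hπ ⊢
    have hi : σ⁻¹ i = i' := by rw [← h1]; simp
    have hj : σ⁻¹ j = j' := by rw [← h2]; simp
    simp [Equiv.Perm.mul_apply, hi, hj, hπ.1, hπ.2]
  · intro π _; group
  · intro π _; group

/-- **Symmetrization does not increase the pairwise chi-square budget**
(Theorem 9.1, eq. (9.1)).  For the symmetrized channel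
`W̄((π,y)|x) = W(y|π⁻¹x)/d!` on `(permutations of Fin d) × 𝒴` and every pair `a ≠ b`,
`χ²(W̄(·|b) ‖ W̄(·|a)) = (1/(d(d−1))) ∑_{i≠j} χ²(W(·|j) ‖ W(·|i))`, which is at most the
worst-case pairwise chi-square divergence of `W`. -/
theorem symmetrization_chi_square (d : ℕ) (hd : 2 ≤ d)
    (Y : Type) [Fintype Y]
    (W : Fin d → Y → ℝ) (hpos : ∀ x y, 0 < W x y) (hrow : ∀ x, ∑ y, W x y = 1)
    (Wbar : Fin d → (Equiv.Perm (Fin d) × Y) → ℝ)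
    (hWbar : ∀ x π y, Wbar x (π, y) = W (π⁻¹ x) y / (Nat.factorial d : ℝ)) :
    ∀ a b : Fin d, a ≠ b →
      (∑ z : Equiv.Perm (Fin d) × Y, (Wbar b z - Wbar a z) ^ 2 / Wbar a z
          = (1 / ((d : ℝ) * ((d : ℝ) - 1))) *
              ∑ ij ∈ Finset.univ.offDiag, ∑ y, (W ij.2 y - W ij.1 y) ^ 2 / W ij.1 y)
      ∧ (∑ z : Equiv.Perm (Fin d) × Y, (Wbar b z - Wbar a z) ^ 2 / Wbar a z
          ≤ sSup {c : ℝ | ∃ i j : Fin d, i ≠ j ∧ c = ∑ y, (W j y - W i y) ^ 2 / W i y}) := by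
  intro a b hab
  classical
  have hk : (0:ℝ) < (Nat.factorial d : ℝ) := by exact_mod_cast Nat.factorial_pos d
  set g : Fin d × Fin d → ℝ := fun p => ∑ y, (W p.2 y - W p.1 y) ^ 2 / W p.1 y with hg
  -- Step 1: reduce to a sum over permutations
  have step1 : ∑ z : Equiv.Perm (Fin d) × Y, (Wbar b z - Wbar a z) ^ 2 / Wbar a z
      = ∑ π : Equiv.Perm (Fin d), g (π⁻¹ a, π⁻¹ b) / (Nat.factorial d : ℝ) := by
    rw [Fintype.sum_prod_type]
    refine Finset.sum_congr rfl (fun π _ => ?_)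
    have hgp : g (π⁻¹ a, π⁻¹ b) = ∑ y, (W (π⁻¹ b) y - W (π⁻¹ a) y) ^ 2 / W (π⁻¹ a) y := rfl
    rw [hgp, Finset.sum_div]
    refine Finset.sum_congr rfl (fun y _ => ?_)
    rw [hWbar, hWbar]
    exact chi_aux _ _ _ (hpos (π⁻¹ a) y).ne' hk.ne'
  have hmap : ∀ π : Equiv.Perm (Fin d), (π⁻¹ a, π⁻¹ b) ∈ (univ : Finset (Fin d)).offDiag := by
    intro π
    exact Finset.mem_offDiag.mpr ⟨mem_univ _, mem_univ _, fun h => hab ((π⁻¹).injective h)⟩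
  have hfilter : ∀ p : Fin d × Fin d,
      (univ.filter (fun π : Equiv.Perm (Fin d) => (π⁻¹ a, π⁻¹ b) = p))
        = (univ.filter (fun π : Equiv.Perm (Fin d) => π p.1 = a ∧ π p.2 = b)) := by
    intro p
    ext π
    simp only [mem_filter, mem_univ, true_and, Prod.ext_iff]
    constructor
    · rintro ⟨h1, h2⟩
      exact ⟨by rw [← h1]; simp, by rw [← h2]; simp⟩
    · rintro ⟨h1, h2⟩
      exact ⟨by rw [← h1]; simp, by rw [← h2]; simp⟩
  set i0 : Fin d := ⟨0, by omega⟩ with hi0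
  set j0 : Fin d := ⟨1, by omega⟩ with hj0
  have hij0 : i0 ≠ j0 := by simp [hi0, hj0, Fin.ext_iff]
  set N : ℕ := (univ.filter (fun π : Equiv.Perm (Fin d) => π i0 = a ∧ π j0 = b)).card with hN
  have hcardN : ∀ p ∈ (univ : Finset (Fin d)).offDiag,
      (univ.filter (fun π : Equiv.Perm (Fin d) => (π⁻¹ a, π⁻¹ b) = p)).card = N := by
    intro p hp
    rw [hfilter p, hN]
    exact (fiber_card_eq a b (Finset.mem_offDiag.mp hp).2.2 hij0)
  -- total count
  have htotal : ((univ : Finset (Fin d)).offDiag).card * N = Nat.factorial d := by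
    have h1 : (univ : Finset (Equiv.Perm (Fin d))).card
        = ∑ p ∈ (univ : Finset (Fin d)).offDiag,
            (univ.filter (fun π : Equiv.Perm (Fin d) => (π⁻¹ a, π⁻¹ b) = p)).card :=
      Finset.card_eq_sum_card_fiberwise (fun π _ => hmap π)
    rw [Finset.sum_congr rfl hcardN, Finset.sum_const, smul_eq_mul] at h1
    rw [← h1, Finset.card_univ, Fintype.card_perm, Fintype.card_fin]
  have hoffcard : ((univ : Finset (Fin d)).offDiag).card = d * d - d := by
    rw [Finset.offDiag_card, Finset.card_univ, Fintype.card_fin]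
  have hddR : ((d * d - d : ℕ) : ℝ) = (d : ℝ) * ((d : ℝ) - 1) := by
    have : d ≤ d * d := Nat.le_mul_of_pos_left d (by omega)
    push_cast [Nat.cast_sub this]
    ring
  have hddpos : (0:ℝ) < (d : ℝ) * ((d : ℝ) - 1) := by
    have : (2:ℝ) ≤ (d:ℝ) := by exact_mod_cast hd
    nlinarith
  -- fiberwise sum
  have step2 : ∑ π : Equiv.Perm (Fin d), g (π⁻¹ a, π⁻¹ b)
      = (N : ℝ) * ∑ p ∈ (univ : Finset (Fin d)).offDiag, g p := by
    rw [← Finset.sum_fiberwise_of_maps_to (fun π _ => hmap π) (fun π => g (π⁻¹ a, π⁻¹ b))]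
    rw [Finset.mul_sum]
    refine Finset.sum_congr rfl (fun p hp => ?_)
    have : ∀ π ∈ univ.filter (fun π : Equiv.Perm (Fin d) => (π⁻¹ a, π⁻¹ b) = p),
        g (π⁻¹ a, π⁻¹ b) = g p := by
      intro π hπ
      rw [(Finset.mem_filter.mp hπ).2]
    rw [Finset.sum_congr rfl this, Finset.sum_const, hcardN p hp, nsmul_eq_mul]
  -- key scalar identity
  have hscalar : (N : ℝ) / (Nat.factorial d : ℝ) = 1 / ((d : ℝ) * ((d : ℝ) - 1)) := by
    have htotal' : (d * d - d) * N = Nat.factorial d := hoffcard ▸ htotal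
    have hNfac : (d : ℝ) * ((d : ℝ) - 1) * (N : ℝ) = (Nat.factorial d : ℝ) := by
      rw [← hddR]
      exact_mod_cast htotal'
    rw [div_eq_div_iff hk.ne' hddpos.ne']
    linarith [hNfac]
  have main : ∑ z : Equiv.Perm (Fin d) × Y, (Wbar b z - Wbar a z) ^ 2 / Wbar a z
      = (1 / ((d : ℝ) * ((d : ℝ) - 1))) * ∑ p ∈ (univ : Finset (Fin d)).offDiag, g p := by
    rw [step1, ← Finset.sum_div, step2, ← hscalar]
    ring
  refine ⟨main, ?_⟩
  -- second part
  set S : Set ℝ := {c : ℝ | ∃ i j : Fin d, i ≠ j ∧ c = ∑ y, (W j y - W i y) ^ 2 / W i y} with hS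
  have hSeq : S = g '' {p : Fin d × Fin d | p.1 ≠ p.2} := by
    ext c
    constructor
    · rintro ⟨i, j, hij, rfl⟩
      exact ⟨(i, j), hij, rfl⟩
    · rintro ⟨⟨i, j⟩, hij, rfl⟩
      exact ⟨i, j, hij, rfl⟩
  have hSfin : S.Finite := by
    rw [hSeq]
    exact (Set.toFinite _).image g
  have hbdd : BddAbove S := hSfin.bddAbove
  have hle : ∀ p ∈ (univ : Finset (Fin d)).offDiag, g p ≤ sSup S := by
    intro p hp
    refine le_csSup hbdd ?_
    exact ⟨p.1, p.2, (Finset.mem_offDiag.mp hp).2.2, rfl⟩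
  have hsum : ∑ p ∈ (univ : Finset (Fin d)).offDiag, g p
      ≤ (((univ : Finset (Fin d)).offDiag).card : ℝ) * sSup S := by
    calc ∑ p ∈ (univ : Finset (Fin d)).offDiag, g p
        ≤ ∑ _p ∈ (univ : Finset (Fin d)).offDiag, sSup S := Finset.sum_le_sum hle
      _ = (((univ : Finset (Fin d)).offDiag).card : ℝ) * sSup S := by
          rw [Finset.sum_const, nsmul_eq_mul]
  rw [main]
  have hcardR : (((univ : Finset (Fin d)).offDiag).card : ℝ) = (d : ℝ) * ((d : ℝ) - 1) := by
    rw [hoffcard, hddR]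
  calc (1 / ((d : ℝ) * ((d : ℝ) - 1))) * ∑ p ∈ (univ : Finset (Fin d)).offDiag, g p
      ≤ (1 / ((d : ℝ) * ((d : ℝ) - 1))) * ((((univ : Finset (Fin d)).offDiag).card : ℝ) * sSup S) := by
        apply mul_le_mul_of_nonneg_left hsum
        positivity
    _ = sSup S := by
        rw [hcardR, one_div, inv_mul_cancel_left₀ hddpos.ne']
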